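/- Let p be an odd prime and m,x ∈ ℤ_p. (i) If m ≢ 0,1 (mod p), then Σ_{k=0}^{p−1} G_k(x)/m^k ≡ Σ_{k=0}^{p−1} C(x,k)C(−1−x,k)/(1−m)^k (mod p). (ii) If m ≢ ±2 (mod p), then Σ_{k=0}^{p−1} C(2k,k)G_k(x)/(m+2)^k ≡ ((m+2)(m−2)/p)·Σ_{k=0}^{p−1} C(2k,k)C(x,k)C(−1−x,k)/(2−m)^k (mod p). Consequently, for p > 3 and m ∈ ℤ_p: Σ_{k=0}^{p−1} G_k^{(3)}/m^k ≡ Σ_{k=0}^{p−1} C(2k,k)C(3k,k)/(27−m)^k (mod p) for m ≢ 0,27 (mod p); Σ_{k=0}^{p−1} G_k^{(4)}/m^k ≡ Σ_{k=0}^{p−1} C(2k,k)C(4k,2k)/(64−m)^k (mod p) for m ≢ 0,64 (mod p); Σ_{k=0}^{p−1} G_k^{(6)}/m^k ≡ Σ_{k=0}^{p−1} C(3k,k)C(6k,3k)/(432−m)^k (mod p) for m ≢ 0,432 (mod p); Σ_{k=0}^{p−1} C(2k,k)G_k^{(3)}/m^k ≡ (m(m−108)/p)·Σ_{k=0}^{p−1}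 C(2k,k)²C(3k,k)/(108−m)^k (mod p) for m ≢ 0,108 (mod p); Σ_{k=0}^{p−1} C(2k,k)G_k^{(4)}/m^k ≡ (m(m−256)/p)·Σ_{k=0}^{p−1} C(2k,k)²C(4k,2k)/(256−m)^k (mod p) for m ≢ 0,256 (mod p); Σ_{k=0}^{p−1} C(2k,k)G_k^{(6)}/m^k ≡ (m(m−1728)/p)·Σ_{k=0}^{p−1} C(2k,k)C(3k,k)C(6k,3k)/(1728−m)^k (mod p) for m ≢ 0,1728 (mod p). -/

import Mathlib

open Finset

/-- Generalized binomial coefficient `C(x,k) = x(x-1)⋯(x-k+1)/k!` for rational `x`. -/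
def qchoose (x : ℚ) (k : ℕ) : ℚ := (∏ i ∈ range k, (x - i)) / (Nat.factorial k)

/-- `r` is a `p`-integer: the denominator of `r` (in lowest terms) is not divisible by `p`. -/
def IsPInt (p : ℕ) (r : ℚ) : Prop := ¬ (p ∣ r.den)

/-- `a ≡ b (mod p^k)` for rationals: `(a - b)/p^k` is a `p`-integer. -/
def RatCong (p k : ℕ) (a b : ℚ) : Prop := IsPInt p ((a - b) / (p : ℚ) ^ k)

/-- The Apéry-like sequence `G_n(x)`. -/
def G (n : ℕ) (x : ℚ) : ℚ :=
  ∑ k ∈ range (n + 1), (n.choose k : ℚ) * (-1) ^ k * qchoose x k * qchoose (-1 - x) k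

/-- The Apéry-like sequence `V_n(x)`. -/
def V (n : ℕ) (x : ℚ) : ℚ :=
  ∑ k ∈ range (n + 1),
    (n.choose k : ℚ) * ((n + k).choose k : ℚ) * (-1) ^ k * qchoose x k * qchoose (-1 - x) k

def Gn (n : ℕ) : ℚ := 16 ^ n * G n (-1/2)
def G3 (n : ℕ) : ℚ := 27 ^ n * G n (-1/3)
def G4 (n : ℕ) : ℚ := 64 ^ n * G n (-1/4)
def G6 (n : ℕ) : ℚ := 432 ^ n * G n (-1/6)

def Vn (n : ℕ) : ℚ := 16 ^ n * V n (-1/2)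
def V3 (n : ℕ) : ℚ := 27 ^ n * V n (-1/3)
def V4 (n : ℕ) : ℚ := 64 ^ n * V n (-1/4)
def V6 (n : ℕ) : ℚ := 432 ^ n * V n (-1/6)

/-- Euler numbers: `E_0 = 1`, `E_{2n-1} = 0`, `E_{2n} = -∑_{k=1}^n C(2n,2k) E_{2n-2k}`. -/
def eulerE : ℕ → ℚ
  | 0 => 1
  | (n + 1) =>
    if (n + 1) % 2 = 1 then 0
    else -∑ k ∈ range ((n + 1) / 2),
        ((n + 1).choose (2 * (k + 1)) : ℚ) * eulerE (n + 1 - 2 * (k + 1))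
decreasing_by omega

/-- The sequence `U_n`: `U_0 = 1`, `U_{2n-1} = 0`, `U_{2n} = -2∑_{k=1}^n C(2n,2k) U_{2n-2k}`. -/
def seqU : ℕ → ℚ
  | 0 => 1
  | (n + 1) =>
    if (n + 1) % 2 = 1 then 0
    else -2 * ∑ k ∈ range ((n + 1) / 2),
        ((n + 1).choose (2 * (k + 1)) : ℚ) * seqU (n + 1 - 2 * (k + 1))
decreasing_by omega

/-- The sequence `s_n`: `s_0 = 1`, `s_n = 1 - ∑_{k=0}^{n-1} C(n,k) 2^{2n-1-2k} s_k`. -/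
def seqS : ℕ → ℚ
  | 0 => 1
  | (n + 1) => 1 - ∑ k ∈ (range (n + 1)).attach,
      ((n + 1).choose k.1 : ℚ) * 2 ^ (2 * (n + 1) - 1 - 2 * k.1) * seqS k.1
decreasing_by exact mem_range.mp k.2

/-- Euler polynomials `E_n(x) = 2^{-n} ∑_{k=0}^n C(n,k) (2x-1)^{n-k} E_k`. -/
def eulerPoly (n : ℕ) (x : ℚ) : ℚ :=
  (∑ k ∈ range (n + 1), (n.choose k : ℚ) * (2 * x - 1) ^ (n - k) * eulerE k) / 2 ^ n

/-- Harmonic numbers `H_n`. -/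
def harm (n : ℕ) : ℚ := ∑ k ∈ range n, 1 / ((k : ℚ) + 1)

/-- Legendre/Jacobi symbol of a rational number whose denominator is coprime to `p`. -/
def qLegendre (r : ℚ) (p : ℕ) : ℤ := jacobiSym (r.num * r.den) p

/-- `(B_{p²(p-1)}(-x) - B_{p²(p-1)})/(p²(p-1))`. -/
noncomputable def bratio (p : ℕ) (x : ℚ) : ℚ :=
  ((Polynomial.bernoulli (p ^ 2 * (p - 1))).eval (-x) - bernoulli (p ^ 2 * (p - 1))) /
    ((p : ℚ) ^ 2 * ((p : ℚ) - 1))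

/-- Franel numbers. -/
def franel (n : ℕ) : ℚ := ∑ k ∈ range (n + 1), (n.choose k : ℚ) ^ 3

def aseq (n : ℕ) : ℚ := ∑ k ∈ range (n + 1), (n.choose k : ℚ) ^ 2 * ((2 * k).choose k : ℚ)

def Qseq (n : ℕ) : ℚ := ∑ k ∈ range (n + 1), (n.choose k : ℚ) * (-8) ^ (n - k) * franel k










section Infra
variable {p : ℕ} [hp : Fact p.Prime]

/-- p-integral with value v in ZMod p. -/
def PF (p : ℕ) [Fact p.Prime] (r : ℚ) (v : ZMod p) : Prop := IsPInt p r ∧ (r : ZMod p) = v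

lemma isPInt_iff_den_ne {r : ℚ} : IsPInt p r ↔ ((r.den : ZMod p) ≠ 0) := by
  simp [IsPInt, ZMod.natCast_eq_zero_iff]

lemma rat_mul_den (a : ℚ) : a * (a.den : ℚ) = (a.num : ℚ) := by
  have h : (a.den : ℚ) ≠ 0 := by exact_mod_cast a.den_ne_zero
  calc a * (a.den : ℚ) = ((a.num : ℚ) / a.den) * a.den := by rw [Rat.num_div_den]
  _ = (a.num : ℚ) := div_mul_cancel₀ _ h

lemma PF.key {r : ℚ} {n d : ℤ} (hd : (d : ZMod p) ≠ 0) (h : r * (d : ℚ) = (n : ℚ)) :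
    PF p r ((n : ZMod p) / (d : ZMod p)) := by
  have hcross : (r.num : ℚ) * (d : ℚ) = (n : ℚ) * (r.den : ℚ) := by
    linear_combination (r.den : ℚ) * h - (d : ℚ) * rat_mul_den r
  have hZ : r.num * d = n * (r.den : ℤ) := by exact_mod_cast hcross
  have hZp : (r.num : ZMod p) * (d : ZMod p) = (n : ZMod p) * (r.den : ZMod p) := by
    have := congrArg (fun z : ℤ => (z : ZMod p)) hZ
    push_cast at this
    exact this
  have hpint : IsPInt p r := by
    intro hdvd
    have h1 : (r.den : ZMod p) = 0 := by
      rwa [ZMod.natCast_eq_zero_iff]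
    have h2 : (r.num : ZMod p) = 0 := by
      have h3 := hZp
      rw [h1, mul_zero] at h3
      exact (mul_eq_zero.mp h3).resolve_right hd
    have h3 : (p : ℤ) ∣ r.num := by rwa [ZMod.intCast_zmod_eq_zero_iff_dvd] at h2
    have h4 : p ∣ r.num.natAbs := by
      have := Int.natAbs_dvd_natAbs.mpr h3
      simpa using this
    have h5 : p ∣ 1 := r.reduced ▸ Nat.dvd_gcd h4 hdvd
    exact hp.out.one_lt.ne' (Nat.dvd_one.mp h5)
  have hden : (r.den : ZMod p) ≠ 0 := isPInt_iff_den_ne.mp hpint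
  refine ⟨hpint, ?_⟩
  rw [Rat.cast_def, div_eq_div_iff hden hd]
  exact hZp

lemma PF.isPInt {r : ℚ} {v : ZMod p} (h : PF p r v) : IsPInt p r := h.1

lemma PF.self {r : ℚ} (h : IsPInt p r) : PF p r (r : ZMod p) := ⟨h, rfl⟩

lemma PF.unique {r : ℚ} {v w : ZMod p} (h : PF p r v) (h' : PF p r w) : v = w := by
  rw [← h.2, h'.2]

lemma PF.congr_val {r : ℚ} {v w : ZMod p} (h : PF p r v) (hv : v = w) : PF p r w := hv ▸ h

lemma PF.congr_rat {r s : ℚ} {v : ZMod p} (h : PF p r v) (hr : r = s) : PF p s v := hr ▸ h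

lemma PF.intCast (n : ℤ) : PF p (n : ℚ) (n : ZMod p) := by
  refine ⟨?_, by push_cast; rfl⟩
  intro hdvd
  rw [Rat.den_intCast] at hdvd
  exact hp.out.one_lt.ne' (Nat.dvd_one.mp hdvd)

lemma PF.natCast (n : ℕ) : PF p (n : ℚ) (n : ZMod p) := by
  have := PF.intCast (p := p) (n : ℤ)
  push_cast at this
  exact this

lemma PF.zero : PF p 0 0 := by have := PF.natCast (p := p) 0; simpa using this
lemma PF.one : PF p 1 1 := by have := PF.natCast (p := p) 1; simpa using this

lemma PF.add {a b : ℚ} {va vb : ZMod p} (ha : PF p a va) (hb : PF p b vb) :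
    PF p (a + b) (va + vb) := by
  have hda : ((a.den : ℤ) : ZMod p) ≠ 0 := by
    push_cast; exact isPInt_iff_den_ne.mp ha.1
  have hdb : ((b.den : ℤ) : ZMod p) ≠ 0 := by
    push_cast; exact isPInt_iff_den_ne.mp hb.1
  have hd : (((a.den : ℤ) * (b.den : ℤ) : ℤ) : ZMod p) ≠ 0 := by
    push_cast at hda hdb ⊢
    exact mul_ne_zero hda hdb
  have heq : (a + b) * (((a.den : ℤ) * (b.den : ℤ) : ℤ) : ℚ)
      = ((a.num * (b.den : ℤ) + b.num * (a.den : ℤ) : ℤ) : ℚ) := by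
    push_cast
    linear_combination (b.den : ℚ) * rat_mul_den a + (a.den : ℚ) * rat_mul_den b
  have h := PF.key (p := p) hd heq
  refine ⟨h.1, ?_⟩
  rw [h.2, ← ha.2, ← hb.2, Rat.cast_def, Rat.cast_def]
  have hda' : ((a.den : ℕ) : ZMod p) ≠ 0 := isPInt_iff_den_ne.mp ha.1
  have hdb' : ((b.den : ℕ) : ZMod p) ≠ 0 := isPInt_iff_den_ne.mp hb.1
  push_cast
  field_simp

lemma PF.mul {a b : ℚ} {va vb : ZMod p} (ha : PF p a va) (hb : PF p b vb) :
    PF p (a * b) (va * vb) := by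
  have hda : ((a.den : ℕ) : ZMod p) ≠ 0 := isPInt_iff_den_ne.mp ha.1
  have hdb : ((b.den : ℕ) : ZMod p) ≠ 0 := isPInt_iff_den_ne.mp hb.1
  have hd : (((a.den : ℤ) * (b.den : ℤ) : ℤ) : ZMod p) ≠ 0 := by
    push_cast
    exact mul_ne_zero hda hdb
  have heq : (a * b) * (((a.den : ℤ) * (b.den : ℤ) : ℤ) : ℚ)
      = ((a.num * b.num : ℤ) : ℚ) := by
    push_cast
    linear_combination (b * (b.den : ℚ)) * rat_mul_den a + (a.num : ℚ) * rat_mul_den b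
  have h := PF.key (p := p) hd heq
  refine ⟨h.1, ?_⟩
  rw [h.2, ← ha.2, ← hb.2, Rat.cast_def, Rat.cast_def]
  push_cast
  field_simp

lemma PF.neg {a : ℚ} {va : ZMod p} (ha : PF p a va) : PF p (-a) (-va) := by
  refine ⟨?_, by rw [Rat.cast_neg, ha.2]⟩
  intro hdvd
  exact ha.1 (by rwa [Rat.neg_den] at hdvd)

lemma PF.sub {a b : ℚ} {va vb : ZMod p} (ha : PF p a va) (hb : PF p b vb) :
    PF p (a - b) (va - vb) := by
  have := ha.add hb.neg
  rw [sub_eq_add_neg, sub_eq_add_neg]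
  exact this

lemma PF.inv {a : ℚ} {va : ZMod p} (ha : PF p a va) (hva : va ≠ 0) :
    PF p a⁻¹ va⁻¹ := by
  have ha0 : a ≠ 0 := by
    rintro rfl
    exact hva (by rw [← ha.2]; simp)
  have heq : a⁻¹ * ((a.num : ℤ) : ℚ) = ((a.den : ℤ) : ℚ) := by
    push_cast
    rw [← rat_mul_den a, ← mul_assoc, inv_mul_cancel₀ ha0, one_mul]
  have hnum : ((a.num : ℤ) : ZMod p) ≠ 0 := by
    intro h0
    apply hva
    rw [← ha.2, Rat.cast_def]
    rw [h0, zero_div]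
  have h := PF.key (p := p) hnum heq
  refine ⟨h.1, ?_⟩
  rw [h.2, ← ha.2, Rat.cast_def]
  push_cast
  rw [inv_div]

lemma PF.div {a b : ℚ} {va vb : ZMod p} (ha : PF p a va) (hb : PF p b vb) (hvb : vb ≠ 0) :
    PF p (a / b) (va / vb) := by
  rw [div_eq_mul_inv, div_eq_mul_inv]
  exact ha.mul (hb.inv hvb)

lemma PF.pow {a : ℚ} {va : ZMod p} (ha : PF p a va) (n : ℕ) : PF p (a ^ n) (va ^ n) := by
  induction n with
  | zero => simpa using PF.one
  | succ n ih => rw [pow_succ, pow_succ]; exact ih.mul ha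

lemma PF.sum {ι : Type*} (s : Finset ι) (f : ι → ℚ) (v : ι → ZMod p)
    (h : ∀ i ∈ s, PF p (f i) (v i)) :
    PF p (∑ i ∈ s, f i) (∑ i ∈ s, v i) := by
  classical
  induction s using Finset.induction_on with
  | empty => simpa using PF.zero
  | insert _ _ hx ih =>
    rw [Finset.sum_insert hx, Finset.sum_insert hx]
    exact (h _ (Finset.mem_insert_self _ _)).add
      (ih fun i hi => h i (Finset.mem_insert_of_mem hi))

lemma ratCong_iff {a b : ℚ} {va vb : ZMod p} (ha : PF p a va) (hb : PF p b vb) :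
    RatCong p 1 a b ↔ va = vb := by
  have hpQ : ((p : ℕ) : ℚ) ≠ 0 := by
    exact_mod_cast hp.out.pos.ne'
  constructor
  · intro h
    have h1 : PF p ((a - b) / (p : ℚ) ^ 1) (((a - b) / (p : ℚ) ^ 1 : ℚ) : ZMod p) :=
      PF.self h
    have h2 := h1.mul (PF.natCast (p := p) p)
    rw [show ((a - b) / (p : ℚ) ^ 1) * ((p : ℕ) : ℚ) = a - b from by
      push_cast; field_simp] at h2
    have h3 := ha.sub hb
    have h4 := h3.unique h2
    rw [ZMod.natCast_self, mul_zero] at h4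
    exact sub_eq_zero.mp h4
  · intro hvv
    have hab : PF p (a - b) 0 := by
      have := ha.sub hb
      rwa [hvv, sub_self] at this
    have hden : ((a - b).den : ZMod p) ≠ 0 := isPInt_iff_den_ne.mp hab.1
    have hnum : ((a - b).num : ZMod p) = 0 := by
      have := hab.2
      rw [Rat.cast_def] at this
      exact by
        field_simp at this
        simpa using this
    have hdvd : (p : ℤ) ∣ (a - b).num := by
      rwa [ZMod.intCast_zmod_eq_zero_iff_dvd] at hnum
    obtain ⟨e, he⟩ := hdvd
    have heq : ((a - b) / (p : ℚ) ^ 1) * (((a - b).den : ℤ) : ℚ) = (e : ℚ) := by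
      have h1 := rat_mul_den (a - b)
      have h2 : ((a - b).num : ℚ) = (p : ℚ) * (e : ℚ) := by exact_mod_cast congrArg (fun z : ℤ => (z : ℚ)) he
      push_cast at h1 h2 ⊢
      field_simp
      linear_combination h1 + h2
    have hd : (((a - b).den : ℤ) : ZMod p) ≠ 0 := by push_cast; exact hden
    exact (PF.key (p := p) hd heq).1
end Infra

section Leg
variable {p : ℕ} [hp : Fact p.Prime]

lemma qLegendre_eq_quadChar {r : ℚ} {v : ZMod p} (h : PF p r v) :
    qLegendre r p = quadraticChar (ZMod p) v := by
  have hden : ((r.den : ℕ) : ZMod p) ≠ 0 := isPInt_iff_den_ne.mp h.1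
  have hval : ((r.num * (r.den : ℤ) : ℤ) : ZMod p) = v * ((r.den : ZMod p)) ^ 2 := by
    rw [← h.2, Rat.cast_def]
    push_cast
    field_simp
  calc qLegendre r p = legendreSym p (r.num * (r.den : ℤ)) :=
        (jacobiSym.legendreSym.to_jacobiSym p _).symm
  _ = quadraticChar (ZMod p) ((r.num * (r.den : ℤ) : ℤ) : ZMod p) := rfl
  _ = quadraticChar (ZMod p) (v * ((r.den : ZMod p)) ^ 2) := by rw [hval]
  _ = quadraticChar (ZMod p) v * (quadraticChar (ZMod p) ((r.den : ZMod p))) ^ 2 := by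
        rw [map_mul, map_pow]
  _ = quadraticChar (ZMod p) v := by rw [quadraticChar_sq_one hden, mul_one]

lemma qLegendre_congr {r r' : ℚ} {v v' : ZMod p} (h : PF p r v) (h' : PF p r' v')
    (u : ZMod p) (hu : u ≠ 0) (hvv : v = v' * u ^ 2) :
    qLegendre r p = qLegendre r' p := by
  rw [qLegendre_eq_quadChar h, qLegendre_eq_quadChar h', hvv, map_mul, map_pow,
    quadraticChar_sq_one hu, mul_one]

lemma qLegendre_cast (hodd : Odd p) {r : ℚ} {v : ZMod p} (h : PF p r v) :
    ((qLegendre r p : ℤ) : ZMod p) = v ^ (p / 2) := by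
  have hden : ((r.den : ℕ) : ZMod p) ≠ 0 := isPInt_iff_den_ne.mp h.1
  have h1 : qLegendre r p = legendreSym p (r.num * (r.den : ℤ)) :=
    (jacobiSym.legendreSym.to_jacobiSym p _).symm
  rw [h1, legendreSym.eq_pow]
  have hval : ((r.num * (r.den : ℤ) : ℤ) : ZMod p) = v * ((r.den : ZMod p)) ^ 2 := by
    rw [← h.2, Rat.cast_def]
    push_cast
    field_simp
  rw [hval, mul_pow, ← pow_mul]
  have h2 : 2 * (p / 2) = p - 1 := by
    obtain ⟨t, ht⟩ := hodd
    omega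
  rw [h2, ZMod.pow_card_sub_one_eq_one hden, mul_one]

lemma natCast_ne_zero_of_lt {k : ℕ} (h0 : k ≠ 0) (h : k < p) : ((k : ℕ) : ZMod p) ≠ 0 := by
  rw [Ne, ZMod.natCast_eq_zero_iff]
  intro hdvd
  exact absurd (Nat.le_of_dvd (Nat.pos_of_ne_zero h0) hdvd) (not_le.mpr h)

lemma factorial_cast_ne {k : ℕ} (h : k < p) : ((k.factorial : ℕ) : ZMod p) ≠ 0 := by
  rw [Ne, ZMod.natCast_eq_zero_iff]
  intro hdvd
  exact absurd ((Nat.Prime.dvd_factorial hp.out).mp hdvd) (not_le.mpr h)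

lemma cast_2a3b_ne (hp3 : 3 < p) (a b : ℕ) : ((2 ^ a * 3 ^ b : ℕ) : ZMod p) ≠ 0 := by
  rw [Ne, ZMod.natCast_eq_zero_iff]
  intro hdvd
  rcases (Nat.Prime.dvd_mul hp.out).mp hdvd with h | h
  · have h2 := hp.out.dvd_of_dvd_pow h
    have := (Nat.prime_dvd_prime_iff_eq hp.out Nat.prime_two).mp h2
    omega
  · have h2 := hp.out.dvd_of_dvd_pow h
    have := (Nat.prime_dvd_prime_iff_eq hp.out Nat.prime_three).mp h2
    omega

end Leg

section Core
variable {p : ℕ} [hp : Fact p.Prime]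

lemma S_lemma (y : ZMod p) (hy : y ≠ 1) :
    ∀ j, j < p → ∑ k ∈ range p, (Nat.choose k j : ZMod p) * y ^ k = (y / (1 - y)) ^ j := by
  have h1y : (1 : ZMod p) - y ≠ 0 := sub_ne_zero.mpr (Ne.symm hy)
  intro j
  induction j with
  | zero =>
    intro _
    simp only [Nat.choose_zero_right, Nat.cast_one, one_mul, pow_zero]
    rw [geom_sum_eq hy p, ZMod.pow_card]
    rw [div_eq_one_iff_eq (sub_ne_zero.mpr hy)]
  | succ j ih =>
    intro hj
    have hjp : j < p := Nat.lt_of_succ_lt hj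
    have Sj := ih hjp
    have hp1 : p = (p - 1) + 1 := (Nat.succ_pred_eq_of_pos hp.out.pos).symm
    have hrange : range p = range ((p - 1) + 1) := by rw [← hp1]
    set A := ∑ k ∈ range p, (Nat.choose k (j + 1) : ZMod p) * y ^ k with hA
    have e1 : A = ∑ k ∈ range (p - 1), (Nat.choose (k + 1) (j + 1) : ZMod p) * y ^ (k + 1) := by
      rw [hA]
      conv_lhs => rw [hrange, Finset.sum_range_succ']
      simp
    have e2 : A = y * (∑ k ∈ range (p - 1), (Nat.choose k j : ZMod p) * y ^ k)
        + y * (∑ k ∈ range (p - 1), (Nat.choose k (j + 1) : ZMod p) * y ^ k) := by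
      rw [e1, Finset.mul_sum, Finset.mul_sum, ← Finset.sum_add_distrib]
      refine Finset.sum_congr rfl fun k _ => ?_
      rw [Nat.choose_succ_succ]
      push_cast
      ring
    have e3 : ∑ k ∈ range (p - 1), (Nat.choose k j : ZMod p) * y ^ k
        = (y / (1 - y)) ^ j - (Nat.choose (p - 1) j : ZMod p) * y ^ (p - 1) := by
      rw [← Sj]
      conv_rhs => rw [hrange, Finset.sum_range_succ]
      ring
    have e4 : ∑ k ∈ range (p - 1), (Nat.choose k (j + 1) : ZMod p) * y ^ k
        = A - (Nat.choose (p - 1) (j + 1) : ZMod p) * y ^ (p - 1) := by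
      rw [hA]
      conv_rhs => rw [hrange, Finset.sum_range_succ]
      ring
    rw [e3, e4] at e2
    have hchoosep : (Nat.choose (p - 1) j : ZMod p) + (Nat.choose (p - 1) (j + 1) : ZMod p) = 0 := by
      have hnat : Nat.choose (p - 1) j + Nat.choose (p - 1) (j + 1) = Nat.choose p (j + 1) := by
        conv_rhs => rw [hp1]
        rw [Nat.choose_succ_succ]
      rw [← Nat.cast_add, hnat, ZMod.natCast_eq_zero_iff]
      exact hp.out.dvd_choose_self (Nat.succ_ne_zero j) hj
    have hA1y : A * (1 - y) = y * (y / (1 - y)) ^ j := by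
      linear_combination e2 - y * y ^ (p - 1) * hchoosep
    rw [pow_succ]
    rw [mul_div_assoc' ((y / (1 - y)) ^ j) y (1 - y), eq_div_iff h1y]
    linear_combination hA1y

lemma central_binom_F (hodd : Odd p) : ∀ k, k < p →
    ((Nat.choose (2 * k) k : ℕ) : ZMod p) = (-4 : ZMod p) ^ k * ((Nat.choose (p / 2) k : ℕ) : ZMod p) := by
  obtain ⟨n, hn⟩ : ∃ n, p = 2 * n + 1 := by
    obtain ⟨t, ht⟩ := hodd; exact ⟨t, by omega⟩
  have hn2 : p / 2 = n := by omega
  rw [hn2]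
  have main : ∀ k, k ≤ n →
      ((Nat.choose (2 * k) k : ℕ) : ZMod p) = (-4 : ZMod p) ^ k * ((Nat.choose n k : ℕ) : ZMod p) := by
    intro k
    induction k with
    | zero => simp
    | succ k ih =>
      intro hk1
      have hk : k ≤ n := Nat.le_of_succ_le hk1
      have IH := ih hk
      have hk1p : ((k : ZMod p) + 1) ≠ 0 := by
        have : (((k + 1 : ℕ)) : ZMod p) ≠ 0 :=
          natCast_ne_zero_of_lt (Nat.succ_ne_zero k) (by omega)
        push_cast at this
        exact this
      -- Nat facts
      have a1 : ((2 * k + 2) * Nat.choose (2 * k + 1) k : ℕ)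
          = (Nat.choose (2 * k + 2) (k + 1) * (k + 1) : ℕ) := by
        have := Nat.add_one_mul_choose_eq (2 * k + 1) k
        simpa [Nat.succ_eq_add_one] using this
      have a3 : Nat.choose (2 * k + 1) (k + 1) = Nat.choose (2 * k + 1) k := by
        have := Nat.choose_symm (show k + 1 ≤ 2 * k + 1 by omega)
        simpa [show 2 * k + 1 - (k + 1) = k by omega] using this.symm
      have a2 : ((2 * k + 1) * Nat.choose (2 * k) k : ℕ)
          = (Nat.choose (2 * k + 1) k * (k + 1) : ℕ) := by
        have := Nat.add_one_mul_choose_eq (2 * k) k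
        simpa [Nat.succ_eq_add_one, a3] using this
      have c4 : (Nat.choose n (k + 1) * (k + 1) : ℕ) = (Nat.choose n k * (n - k) : ℕ) :=
        Nat.choose_succ_right_eq n k
      -- cast to ZMod p
      have A1 : ((2 * (k : ZMod p) + 2) * ((Nat.choose (2 * k + 1) k : ℕ) : ZMod p))
          = ((Nat.choose (2 * k + 2) (k + 1) : ℕ) : ZMod p) * ((k : ZMod p) + 1) := by
        exact_mod_cast congrArg (fun z : ℕ => (z : ZMod p)) a1
      have A2 : ((2 * (k : ZMod p) + 1) * ((Nat.choose (2 * k) k : ℕ) : ZMod p))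
          = ((Nat.choose (2 * k + 1) k : ℕ) : ZMod p) * ((k : ZMod p) + 1) := by
        exact_mod_cast congrArg (fun z : ℕ => (z : ZMod p)) a2
      have C4 : ((Nat.choose n (k + 1) : ℕ) : ZMod p) * ((k : ZMod p) + 1)
          = ((Nat.choose n k : ℕ) : ZMod p) * ((n : ZMod p) - (k : ZMod p)) := by
        have := congrArg (fun z : ℕ => (z : ZMod p)) c4
        push_cast [Nat.cast_sub hk] at this
        exact_mod_cast this
      have hnF : 2 * (n : ZMod p) + 1 = 0 := by
        have h0 : ((2 * n + 1 : ℕ) : ZMod p) = 0 := by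
          rw [← hn]; exact ZMod.natCast_self p
        push_cast at h0
        exact h0
      -- goal
      have hidx : 2 * (k + 1) = 2 * k + 2 := by ring
      rw [hidx]
      apply mul_right_cancel₀ (pow_ne_zero 2 hk1p)
      have expand : ((Nat.choose (2 * k + 2) (k + 1) : ℕ) : ZMod p) * ((k : ZMod p) + 1) ^ 2
          = (2 * (k : ZMod p) + 2) * (2 * (k : ZMod p) + 1) * ((Nat.choose (2 * k) k : ℕ) : ZMod p) := by
        linear_combination (-((k : ZMod p) + 1)) * A1 - (2 * (k : ZMod p) + 2) * A2
      rw [expand, IH]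
      rw [pow_succ]
      linear_combination (4 * (-4 : ZMod p) ^ k * ((k : ZMod p) + 1)) * C4
        + ((-4 : ZMod p) ^ k * ((Nat.choose n k : ℕ) : ZMod p) * 2 * ((k : ZMod p) + 1)) * hnF
  intro k hk
  by_cases hkn : k ≤ n
  · exact main k hkn
  · push_neg at hkn
    have h0 : Nat.choose n k = 0 := Nat.choose_eq_zero_of_lt hkn
    have hdvd : p ∣ Nat.choose (2 * k) k := by
      refine Nat.Prime.dvd_choose hp.out hk ?_ ?_
      · omega
      · omega
    rw [h0]
    rw [(ZMod.natCast_eq_zero_iff _ _).mpr hdvd]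
    simp

end Core

section Core2
variable {p : ℕ} [hp : Fact p.Prime]

lemma trin_F {n j i : ℕ} (hn : n < p) (h : j + i ≤ n) :
    ((Nat.choose n (j + i) : ℕ) : ZMod p) * ((Nat.choose (j + i) j : ℕ) : ZMod p)
      = ((Nat.choose n j : ℕ) : ZMod p) * ((Nat.choose (n - j) i : ℕ) : ZMod p) := by
  have hj : j ≤ n := le_trans (Nat.le_add_right j i) h
  have hi : i ≤ n - j := by omega
  have h1 : Nat.choose (j + i) j * Nat.factorial j * Nat.factorial i = Nat.factorial (j + i) := by
    have := Nat.choose_mul_factorial_mul_factorial (Nat.le_add_right j i)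
    simpa [Nat.add_sub_cancel_left] using this
  have h2 : Nat.choose n (j + i) * Nat.factorial (j + i) * Nat.factorial (n - j - i)
      = Nat.factorial n := by
    have := Nat.choose_mul_factorial_mul_factorial h
    simpa [Nat.sub_sub] using this
  have h3 : Nat.choose n j * Nat.factorial j * Nat.factorial (n - j) = Nat.factorial n :=
    Nat.choose_mul_factorial_mul_factorial hj
  have h4 : Nat.choose (n - j) i * Nat.factorial i * Nat.factorial (n - j - i)
      = Nat.factorial (n - j) := by
    have := Nat.choose_mul_factorial_mul_factorial hi
    simpa [Nat.sub_sub] using this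
  have H1 := congrArg (fun z : ℕ => (z : ZMod p)) h1
  have H2 := congrArg (fun z : ℕ => (z : ZMod p)) h2
  have H3 := congrArg (fun z : ℕ => (z : ZMod p)) h3
  have H4 := congrArg (fun z : ℕ => (z : ZMod p)) h4
  push_cast at H1 H2 H3 H4
  have f1 : ((Nat.factorial j : ℕ) : ZMod p) ≠ 0 := factorial_cast_ne (by omega)
  have f2 : ((Nat.factorial i : ℕ) : ZMod p) ≠ 0 := factorial_cast_ne (by omega)
  have f3 : ((Nat.factorial (n - j - i) : ℕ) : ZMod p) ≠ 0 := factorial_cast_ne (by omega)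
  apply mul_right_cancel₀ (mul_ne_zero (mul_ne_zero f1 f2) f3)
  linear_combination ((Nat.choose n (j + i) : ℕ) : ZMod p) * ((Nat.factorial (n-j-i) : ℕ) : ZMod p) * H1
    + H2 - H3 - ((Nat.choose n j : ℕ) : ZMod p) * ((Nat.factorial j : ℕ) : ZMod p) * H4

lemma trin_sum {n : ℕ} (hn : n < p) (s : ZMod p) (j : ℕ) :
    ∑ k ∈ range p, ((Nat.choose n k : ℕ) : ZMod p) * ((Nat.choose k j : ℕ) : ZMod p) * s ^ k
      = ((Nat.choose n j : ℕ) : ZMod p) * s ^ j * (1 + s) ^ (n - j) := by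
  by_cases hj : j ≤ n
  · have e1 : ∑ k ∈ range p, ((Nat.choose n k : ℕ) : ZMod p) * ((Nat.choose k j : ℕ) : ZMod p) * s ^ k
        = ∑ k ∈ range (n + 1), ((Nat.choose n k : ℕ) : ZMod p) * ((Nat.choose k j : ℕ) : ZMod p) * s ^ k := by
      symm
      apply Finset.sum_subset
      · exact Finset.range_subset_range.mpr (by omega)
      · intro x _ hx
        rw [Finset.mem_range, not_lt] at hx
        rw [Nat.choose_eq_zero_of_lt (by omega)]
        simp
    have e2 : ∑ k ∈ range (n + 1), ((Nat.choose n k : ℕ) : ZMod p) * ((Nat.choose k j : ℕ) : ZMod p) * s ^ k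
        = ∑ k ∈ Finset.Ico j (n + 1), ((Nat.choose n k : ℕ) : ZMod p) * ((Nat.choose k j : ℕ) : ZMod p) * s ^ k := by
      symm
      apply Finset.sum_subset
      · rw [Finset.range_eq_Ico]
        exact Finset.Ico_subset_Ico (Nat.zero_le j) le_rfl
      · intro x hx hnx
        rw [Finset.mem_range] at hx
        rw [Finset.mem_Ico, not_and_or] at hnx
        have hxj : x < j := by omega
        rw [Nat.choose_eq_zero_of_lt hxj]
        simp
    rw [e1, e2, Finset.sum_Ico_eq_sum_range]
    have e3 : ∀ i ∈ range (n + 1 - j),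
        ((Nat.choose n (j + i) : ℕ) : ZMod p) * ((Nat.choose (j + i) j : ℕ) : ZMod p) * s ^ (j + i)
          = ((Nat.choose n j : ℕ) : ZMod p) * s ^ j * (((Nat.choose (n - j) i : ℕ) : ZMod p) * s ^ i) := by
      intro i hi
      rw [Finset.mem_range] at hi
      rw [trin_F hn (by omega), pow_add]
      ring
    rw [Finset.sum_congr rfl e3, ← Finset.mul_sum]
    congr 1
    have e4 : (1 + s) ^ (n - j) = ∑ i ∈ range (n - j + 1), s ^ i * 1 ^ (n - j - i) * ((Nat.choose (n - j) i : ℕ) : ZMod p) := by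
      rw [add_comm (1 : ZMod p) s]
      exact add_pow s 1 (n - j)
    rw [show n + 1 - j = n - j + 1 by omega, e4]
    refine Finset.sum_congr rfl fun i _ => ?_
    rw [one_pow]
    ring
  · push_neg at hj
    rw [Nat.choose_eq_zero_of_lt hj]
    simp only [Nat.cast_zero, zero_mul]
    apply Finset.sum_eq_zero
    intro k _
    by_cases hk : k ≤ n
    · rw [Nat.choose_eq_zero_of_lt (by omega : k < j)]
      simp
    · rw [Nat.choose_eq_zero_of_lt (by omega : n < k)]
      simp

lemma core1 (c : ℕ → ZMod p) (M : ZMod p) (hM0 : M ≠ 0) (hM1 : M ≠ 1) :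
    ∑ k ∈ range p, (∑ j ∈ range (k + 1), ((Nat.choose k j : ℕ) : ZMod p) * (-1) ^ j * c j) / M ^ k
      = ∑ k ∈ range p, c k / (1 - M) ^ k := by
  have h1M : (1 : ZMod p) - M ≠ 0 := sub_ne_zero.mpr (Ne.symm hM1)
  have hy1 : M⁻¹ ≠ 1 := by
    intro h
    exact hM1 (by rwa [inv_eq_one] at h)
  have step1 : ∀ k ∈ range p,
      (∑ j ∈ range (k + 1), ((Nat.choose k j : ℕ) : ZMod p) * (-1) ^ j * c j) / M ^ k
        = ∑ j ∈ range p, ((Nat.choose k j : ℕ) : ZMod p) * (-1) ^ j * c j * (M⁻¹) ^ k := by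
    intro k hk
    rw [Finset.mem_range] at hk
    rw [div_eq_mul_inv, ← inv_pow, Finset.sum_mul]
    apply Finset.sum_subset
    · exact Finset.range_subset_range.mpr (by omega)
    · intro x _ hx
      rw [Finset.mem_range, not_lt] at hx
      rw [Nat.choose_eq_zero_of_lt (by omega)]
      simp
  rw [Finset.sum_congr rfl step1, Finset.sum_comm]
  refine Finset.sum_congr rfl fun j hj => ?_
  rw [Finset.mem_range] at hj
  have hpull : ∑ k ∈ range p, ((Nat.choose k j : ℕ) : ZMod p) * (-1) ^ j * c j * (M⁻¹) ^ k
      = ((-1) ^ j * c j) * ∑ k ∈ range p, ((Nat.choose k j : ℕ) : ZMod p) * (M⁻¹) ^ k := by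
    rw [Finset.mul_sum]
    exact Finset.sum_congr rfl fun k _ => by ring
  rw [hpull, S_lemma M⁻¹ hy1 j hj]
  have hy0 : (1 : ZMod p) - M⁻¹ ≠ 0 := sub_ne_zero.mpr (Ne.symm hy1)
  have h1M' : (-1 : ZMod p) + M ≠ 0 := fun h => h1M (by linear_combination -h)
  have hu : ((-1 : ZMod p)) * (M⁻¹ / (1 - M⁻¹)) = (1 - M)⁻¹ := by
    field_simp
    ring
  calc (-1 : ZMod p) ^ j * c j * (M⁻¹ / (1 - M⁻¹)) ^ j
      = c j * (((-1 : ZMod p)) * (M⁻¹ / (1 - M⁻¹))) ^ j := by rw [mul_pow]; ring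
  _ = c j * ((1 - M)⁻¹) ^ j := by rw [hu]
  _ = c j / (1 - M) ^ j := by rw [inv_pow, ← div_eq_mul_inv]

lemma core2 (hodd : Odd p) (c : ℕ → ZMod p) (M : ZMod p) (hM2 : M + 2 ≠ 0) (hM2' : M - 2 ≠ 0) :
    ∑ k ∈ range p, ((Nat.choose (2 * k) k : ℕ) : ZMod p)
        * (∑ j ∈ range (k + 1), ((Nat.choose k j : ℕ) : ZMod p) * (-1) ^ j * c j) / (M + 2) ^ k
      = ((M + 2) * (M - 2)) ^ (p / 2)
        * ∑ k ∈ range p, ((Nat.choose (2 * k) k : ℕ) : ZMod p) * c k / (2 - M) ^ k := by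
  set n := p / 2 with hn
  have hnp : n < p := Nat.div_lt_self hp.out.pos (by norm_num)
  have h2M : (2 : ZMod p) - M ≠ 0 := by
    intro h
    exact hM2' (by linear_combination -h)
  have hp2n : p - 1 = 2 * n := by
    obtain ⟨t, ht⟩ := hodd
    omega
  have hfermat : (M + 2) ^ (2 * n) = 1 := by
    rw [← hp2n]
    exact ZMod.pow_card_sub_one_eq_one hM2
  have hMi : (M + 2)⁻¹ ≠ 0 := inv_ne_zero hM2
  have step1 : ∀ k ∈ range p,
      ((Nat.choose (2 * k) k : ℕ) : ZMod p)
          * (∑ j ∈ range (k + 1), ((Nat.choose k j : ℕ) : ZMod p) * (-1) ^ j * c j) / (M + 2) ^ k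
        = ∑ j ∈ range p, ((Nat.choose n k : ℕ) : ZMod p) * ((Nat.choose k j : ℕ) : ZMod p)
            * ((-4) * (M + 2)⁻¹) ^ k * ((-1) ^ j * c j) := by
    intro k hk
    rw [Finset.mem_range] at hk
    have expand : ((Nat.choose (2 * k) k : ℕ) : ZMod p)
          * (∑ j ∈ range (k + 1), ((Nat.choose k j : ℕ) : ZMod p) * (-1) ^ j * c j) / (M + 2) ^ k
        = ∑ j ∈ range (k + 1), ((Nat.choose n k : ℕ) : ZMod p) * ((Nat.choose k j : ℕ) : ZMod p)
            * ((-4) * (M + 2)⁻¹) ^ k * ((-1) ^ j * c j) := by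
      rw [central_binom_F hodd k hk, ← hn, div_eq_mul_inv, Finset.mul_sum, Finset.sum_mul]
      refine Finset.sum_congr rfl fun j _ => by ring
    rw [expand]
    apply Finset.sum_subset (Finset.range_subset_range.mpr (by omega))
    intro x _ hx
    rw [Finset.mem_range, not_lt] at hx
    rw [Nat.choose_eq_zero_of_lt (show k < x from by omega)]
    simp
  rw [Finset.sum_congr rfl step1, Finset.sum_comm]
  have step2 : ∀ j ∈ range p,
      ∑ k ∈ range p, ((Nat.choose n k : ℕ) : ZMod p) * ((Nat.choose k j : ℕ) : ZMod p)
          * ((-4) * (M + 2)⁻¹) ^ k * ((-1) ^ j * c j)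
        = ((-1) ^ j * c j) * (((Nat.choose n j : ℕ) : ZMod p) * ((-4) * (M + 2)⁻¹) ^ j
            * (1 + (-4) * (M + 2)⁻¹) ^ (n - j)) := by
    intro j _
    rw [← trin_sum hnp ((-4) * (M + 2)⁻¹) j, Finset.mul_sum]
    exact Finset.sum_congr rfl fun k _ => by ring
  rw [Finset.sum_congr rfl step2]
  have step3 : ∀ k ∈ range p,
      ((Nat.choose (2 * k) k : ℕ) : ZMod p) * c k / (2 - M) ^ k
        = ((-4) ^ k * ((Nat.choose n k : ℕ) : ZMod p)) * c k / (2 - M) ^ k := by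
    intro k hk
    rw [Finset.mem_range] at hk
    rw [central_binom_F hodd k hk, ← hn]
  rw [Finset.sum_congr rfl step3, Finset.mul_sum]
  refine Finset.sum_congr rfl fun j hj => ?_
  by_cases hjn : j ≤ n
  · have hs : (1 : ZMod p) + (-4) * (M + 2)⁻¹ = (M - 2) * (M + 2)⁻¹ := by
      field_simp
      ring
    rw [hs]
    obtain ⟨r, hr⟩ : ∃ r, n = j + r := ⟨n - j, by omega⟩
    have hfj : (M + 2) ^ (2 * (j + r)) = 1 := by rw [← hr]; exact hfermat
    have hnj : n - j = r := by omega
    rw [hnj, hr]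
    have hfj2 : (M + 2) ^ (j + r) * (M + 2) ^ (j + r) = 1 := by
      rw [← pow_add, show (j + r) + (j + r) = 2 * (j + r) from by ring]
      exact hfj
    have key : ((M + 2) ^ (j + r))⁻¹ = (M + 2) ^ (j + r) := inv_eq_of_mul_eq_one_left hfj2
    have e9 : ((M + 2) ^ j)⁻¹ * ((M + 2) ^ r)⁻¹ = (M + 2) ^ j * (M + 2) ^ r := by
      rw [← mul_inv, ← pow_add, key, pow_add]
    have heta : (-1 : ZMod p) ^ j * (-1) ^ j = 1 := by
      rw [← mul_pow]
      norm_num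
    have e5 : ((-4 : ZMod p) * (M + 2)⁻¹) ^ j = (-4) ^ j * ((M + 2) ^ j)⁻¹ := by
      rw [mul_pow, inv_pow]
    have e6 : ((M - 2) * (M + 2)⁻¹) ^ r = (M - 2) ^ r * ((M + 2) ^ r)⁻¹ := by
      rw [mul_pow, inv_pow]
    have e7 : ((M + 2) * (M - 2)) ^ (j + r) = (M + 2) ^ j * (M + 2) ^ r * ((M - 2) ^ j * (M - 2) ^ r) := by
      rw [mul_pow, pow_add, pow_add]
    have e8 : ((2 : ZMod p) - M) ^ j = (-1) ^ j * (M - 2) ^ j := by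
      rw [show (2 : ZMod p) - M = -(M - 2) from by ring, neg_pow]
    apply mul_right_cancel₀ (pow_ne_zero j h2M)
    conv_rhs => rw [mul_assoc, div_mul_cancel₀ _ (pow_ne_zero j h2M)]
    rw [e5, e6, e7, e8]
    set C : ZMod p := ((Nat.choose (j + r) j : ℕ) : ZMod p) with hC
    linear_combination ((-4 : ZMod p) ^ j * C * c j * (M - 2) ^ j * (M - 2) ^ r * ((-1 : ZMod p) ^ j * (-1) ^ j)) * e9
      + ((-4 : ZMod p) ^ j * C * c j * (M - 2) ^ j * (M - 2) ^ r * ((M + 2) ^ j * (M + 2) ^ r)) * heta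
  · push_neg at hjn
    rw [Nat.choose_eq_zero_of_lt hjn]
    simp
end Core2

section QFacts

lemma qchoose_succ (x : ℚ) (k : ℕ) : qchoose x (k + 1) = qchoose x k * (x - k) / (k + 1) := by
  unfold qchoose
  rw [Finset.prod_range_succ, Nat.factorial_succ]
  push_cast
  rw [div_mul_eq_mul_div, div_div, mul_comm ((k : ℚ) + 1) (Nat.factorial k : ℚ)]

lemma qchoose_zero (x : ℚ) : qchoose x 0 = 1 := by simp [qchoose]

lemma fact_cast_ne (k : ℕ) : (Nat.factorial k : ℚ) ≠ 0 := Nat.cast_ne_zero.mpr (Nat.factorial_ne_zero k)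

lemma id3 : ∀ k : ℕ, (27 : ℚ) ^ k * qchoose (-1/3) k * qchoose (-2/3) k * (Nat.factorial k : ℚ) ^ 3
    = ((3 * k).factorial : ℚ) := by
  intro k
  induction k with
  | zero => simp [qchoose]
  | succ k ih =>
    have hfac : ((3 * (k + 1)).factorial : ℚ)
        = ((3 * k).factorial : ℚ) * ((3 * (k : ℚ) + 1) * (3 * (k : ℚ) + 2) * (3 * (k : ℚ) + 3)) := by
      rw [show 3 * (k + 1) = 3 * k + 2 + 1 from by omega, Nat.factorial_succ,
        show 3 * k + 2 = 3 * k + 1 + 1 from by omega, Nat.factorial_succ, Nat.factorial_succ]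
      push_cast
      ring
    rw [hfac, ← ih, qchoose_succ, qchoose_succ, Nat.factorial_succ, pow_succ]
    have h2 : ((k : ℚ) + 1) ≠ 0 := by positivity
    push_cast
    field_simp
    ring

lemma id4 : ∀ k : ℕ, (64 : ℚ) ^ k * qchoose (-1/4) k * qchoose (-3/4) k
      * ((Nat.factorial k : ℚ) ^ 2 * ((2 * k).factorial : ℚ))
    = ((4 * k).factorial : ℚ) := by
  intro k
  induction k with
  | zero => simp [qchoose]
  | succ k ih =>
    have hfac : ((4 * (k + 1)).factorial : ℚ)
        = ((4 * k).factorial : ℚ) * ((4 * (k : ℚ) + 1) * (4 * (k : ℚ) + 2) * (4 * (k : ℚ) + 3) * (4 * (k : ℚ) + 4)) := by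
      rw [show 4 * (k + 1) = 4 * k + 3 + 1 from by omega, Nat.factorial_succ,
        show 4 * k + 3 = 4 * k + 2 + 1 from by omega, Nat.factorial_succ,
        show 4 * k + 2 = 4 * k + 1 + 1 from by omega, Nat.factorial_succ, Nat.factorial_succ]
      push_cast
      ring
    have hfac2 : ((2 * (k + 1)).factorial : ℚ)
        = ((2 * k).factorial : ℚ) * ((2 * (k : ℚ) + 1) * (2 * (k : ℚ) + 2)) := by
      rw [show 2 * (k + 1) = 2 * k + 1 + 1 from by omega, Nat.factorial_succ, Nat.factorial_succ]
      push_cast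
      ring
    rw [hfac, ← ih, qchoose_succ, qchoose_succ, Nat.factorial_succ, pow_succ, hfac2]
    have h2 : ((k : ℚ) + 1) ≠ 0 := by positivity
    push_cast
    field_simp
    ring

lemma id6 : ∀ k : ℕ, (432 : ℚ) ^ k * qchoose (-1/6) k * qchoose (-5/6) k
      * ((Nat.factorial k : ℚ) * ((2 * k).factorial : ℚ) * ((3 * k).factorial : ℚ))
    = ((6 * k).factorial : ℚ) := by
  intro k
  induction k with
  | zero => simp [qchoose]
  | succ k ih =>
    have hfac : ((6 * (k + 1)).factorial : ℚ)
        = ((6 * k).factorial : ℚ) * ((6 * (k : ℚ) + 1) * (6 * (k : ℚ) + 2) * (6 * (k : ℚ) + 3)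
            * (6 * (k : ℚ) + 4) * (6 * (k : ℚ) + 5) * (6 * (k : ℚ) + 6)) := by
      rw [show 6 * (k + 1) = 6 * k + 5 + 1 from by omega, Nat.factorial_succ,
        show 6 * k + 5 = 6 * k + 4 + 1 from by omega, Nat.factorial_succ,
        show 6 * k + 4 = 6 * k + 3 + 1 from by omega, Nat.factorial_succ,
        show 6 * k + 3 = 6 * k + 2 + 1 from by omega, Nat.factorial_succ,
        show 6 * k + 2 = 6 * k + 1 + 1 from by omega, Nat.factorial_succ, Nat.factorial_succ]
      push_cast
      ring
    have hfac2 : ((2 * (k + 1)).factorial : ℚ)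
        = ((2 * k).factorial : ℚ) * ((2 * (k : ℚ) + 1) * (2 * (k : ℚ) + 2)) := by
      rw [show 2 * (k + 1) = 2 * k + 1 + 1 from by omega, Nat.factorial_succ, Nat.factorial_succ]
      push_cast
      ring
    have hfac3 : ((3 * (k + 1)).factorial : ℚ)
        = ((3 * k).factorial : ℚ) * ((3 * (k : ℚ) + 1) * (3 * (k : ℚ) + 2) * (3 * (k : ℚ) + 3)) := by
      rw [show 3 * (k + 1) = 3 * k + 2 + 1 from by omega, Nat.factorial_succ,
        show 3 * k + 2 = 3 * k + 1 + 1 from by omega, Nat.factorial_succ, Nat.factorial_succ]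
      push_cast
      ring
    rw [hfac, ← ih, qchoose_succ, qchoose_succ, Nat.factorial_succ, hfac2, hfac3]
    have h2 : ((k : ℚ) + 1) ≠ 0 := by positivity
    push_cast
    field_simp
    ring

lemma G3_id (k : ℕ) : (27 : ℚ) ^ k * (qchoose (-1/3) k * qchoose (-2/3) k)
    = ((2 * k).choose k : ℚ) * ((3 * k).choose k : ℚ) := by
  rw [Nat.cast_choose ℚ (show k ≤ 2 * k by omega), Nat.cast_choose ℚ (show k ≤ 3 * k by omega),
    show 2 * k - k = k from by omega, show 3 * k - k = 2 * k from by omega]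
  have h1 := fact_cast_ne k
  have h2 := fact_cast_ne (2 * k)
  field_simp
  have h := id3 k
  rw [neg_div, neg_div] at h
  linear_combination h

lemma G4_id (k : ℕ) : (64 : ℚ) ^ k * (qchoose (-1/4) k * qchoose (-3/4) k)
    = ((2 * k).choose k : ℚ) * ((4 * k).choose (2 * k) : ℚ) := by
  rw [Nat.cast_choose ℚ (show k ≤ 2 * k by omega), Nat.cast_choose ℚ (show 2 * k ≤ 4 * k by omega),
    show 2 * k - k = k from by omega, show 4 * k - 2 * k = 2 * k from by omega]
  have h1 := fact_cast_ne k
  have h2 := fact_cast_ne (2 * k)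
  field_simp
  have h := id4 k
  rw [neg_div, neg_div] at h
  linear_combination h

lemma G6_id (k : ℕ) : (432 : ℚ) ^ k * (qchoose (-1/6) k * qchoose (-5/6) k)
    = ((3 * k).choose k : ℚ) * ((6 * k).choose (3 * k) : ℚ) := by
  rw [Nat.cast_choose ℚ (show k ≤ 3 * k by omega), Nat.cast_choose ℚ (show 3 * k ≤ 6 * k by omega),
    show 3 * k - k = 2 * k from by omega, show 6 * k - 3 * k = 3 * k from by omega]
  have h1 := fact_cast_ne k
  have h2 := fact_cast_ne (2 * k)
  have h3 := fact_cast_ne (3 * k)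
  field_simp
  have h := id6 k
  rw [neg_div, neg_div] at h
  linear_combination h

end QFacts

section Glue
variable {p : ℕ} [hp : Fact p.Prime]

lemma PF.prod {ι : Type*} (s : Finset ι) (f : ι → ℚ) (v : ι → ZMod p)
    (h : ∀ i ∈ s, PF p (f i) (v i)) :
    PF p (∏ i ∈ s, f i) (∏ i ∈ s, v i) := by
  classical
  induction s using Finset.induction_on with
  | empty => simpa using PF.one
  | insert _ _ hx ih =>
    rw [Finset.prod_insert hx, Finset.prod_insert hx]
    exact (h _ (Finset.mem_insert_self _ _)).mul
      (ih fun i hi => h i (Finset.mem_insert_of_mem hi))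

lemma PF.ofQchoose {x : ℚ} {X : ZMod p} (hx : PF p x X) {k : ℕ} (hk : k < p) :
    PF p (qchoose x k) ((∏ i ∈ range k, (X - (i : ZMod p))) / ((Nat.factorial k : ℕ) : ZMod p)) := by
  unfold qchoose
  exact (PF.prod (range k) _ _ fun i _ => hx.sub (PF.natCast i)).div
    (PF.natCast (Nat.factorial k)) (factorial_cast_ne hk)

/-- value function for the `c` sequence. -/
noncomputable def cF (p : ℕ) [Fact p.Prime] (x : ℚ) (j : ℕ) : ZMod p :=
  ((qchoose x j : ℚ) : ZMod p) * ((qchoose (-1 - x) j : ℚ) : ZMod p)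

lemma PF.ofCF {x : ℚ} (hx : IsPInt p x) {j : ℕ} (hj : j < p) :
    PF p (qchoose x j * qchoose (-1 - x) j) (cF p x j) := by
  have hx1 : IsPInt p (-1 - x) := ((PF.one.neg).sub (PF.self hx)).1
  exact (PF.self ((PF.ofQchoose (PF.self hx) hj).1)).mul
    (PF.self ((PF.ofQchoose (PF.self hx1) hj).1))

lemma PF.ofG {x : ℚ} (hx : IsPInt p x) {k : ℕ} (hk : k < p) :
    PF p (G k x) (∑ j ∈ range (k + 1), ((Nat.choose k j : ℕ) : ZMod p) * (-1) ^ j * cF p x j) := by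
  unfold G
  refine PF.sum _ _ _ fun j hj => ?_
  rw [Finset.mem_range] at hj
  have hjp : j < p := by omega
  have h1 : PF p ((Nat.choose k j : ℚ) * (-1) ^ j)
      (((Nat.choose k j : ℕ) : ZMod p) * (-1) ^ j) :=
    (PF.natCast _).mul ((PF.one.neg).pow j)
  have h2 := (h1.mul (PF.self ((PF.ofQchoose (PF.self hx) hjp).1))).mul
    (PF.self ((PF.ofQchoose (PF.self ((PF.one.neg.sub (PF.self hx)).1)) hjp).1))
  exact h2.congr_val (by rw [cF]; ring)

lemma PF.two : PF p (2 : ℚ) (2 : ZMod p) :=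
  ((PF.natCast 2).congr_rat (by norm_num)).congr_val (by norm_num)

lemma main1 (hodd : Odd p) {m x : ℚ} (hm : IsPInt p m) (hx : IsPInt p x)
    (h0 : (m : ZMod p) ≠ 0) (h1 : (m : ZMod p) ≠ 1) :
    RatCong p 1 (∑ k ∈ range p, G k x / m ^ k)
      (∑ k ∈ range p, qchoose x k * qchoose (-1 - x) k / (1 - m) ^ k) := by
  have h1M : (1 : ZMod p) - (m : ZMod p) ≠ 0 := sub_ne_zero.mpr (Ne.symm h1)
  have hLHS : PF p (∑ k ∈ range p, G k x / m ^ k)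
      (∑ k ∈ range p, (∑ j ∈ range (k + 1),
        ((Nat.choose k j : ℕ) : ZMod p) * (-1) ^ j * cF p x j) / (m : ZMod p) ^ k) := by
    refine PF.sum _ _ _ fun k hk => ?_
    rw [Finset.mem_range] at hk
    exact (PF.ofG hx hk).div ((PF.self hm).pow k) (pow_ne_zero k h0)
  have hRHS : PF p (∑ k ∈ range p, qchoose x k * qchoose (-1 - x) k / (1 - m) ^ k)
      (∑ k ∈ range p, cF p x k / (1 - (m : ZMod p)) ^ k) := by
    refine PF.sum _ _ _ fun k hk => ?_
    rw [Finset.mem_range] at hk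
    exact (PF.ofCF hx hk).div ((PF.one.sub (PF.self hm)).pow k) (pow_ne_zero k h1M)
  exact (ratCong_iff hLHS hRHS).mpr (core1 (cF p x) (m : ZMod p) h0 h1)

lemma main2 (hodd : Odd p) {m x : ℚ} (hm : IsPInt p m) (hx : IsPInt p x)
    (h2 : (m : ZMod p) + 2 ≠ 0) (h2' : (m : ZMod p) - 2 ≠ 0) :
    RatCong p 1 (∑ k ∈ range p, ((2 * k).choose k : ℚ) * G k x / (m + 2) ^ k)
      ((qLegendre ((m + 2) * (m - 2)) p : ℚ) *
        ∑ k ∈ range p, ((2 * k).choose k : ℚ) * qchoose x k * qchoose (-1 - x) k / (2 - m) ^ k) := by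
  have h2M : (2 : ZMod p) - (m : ZMod p) ≠ 0 := fun h => h2' (by linear_combination -h)
  have hprod : PF p ((m + 2) * (m - 2)) (((m : ZMod p) + 2) * ((m : ZMod p) - 2)) :=
    ((PF.self hm).add PF.two).mul ((PF.self hm).sub PF.two)
  have hcoef : PF p ((qLegendre ((m + 2) * (m - 2)) p : ℤ) : ℚ)
      ((((m : ZMod p) + 2) * ((m : ZMod p) - 2)) ^ (p / 2)) :=
    (PF.intCast _).congr_val (qLegendre_cast hodd hprod)
  have hLHS : PF p (∑ k ∈ range p, ((2 * k).choose k : ℚ) * G k x / (m + 2) ^ k)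
      (∑ k ∈ range p, ((Nat.choose (2 * k) k : ℕ) : ZMod p) * (∑ j ∈ range (k + 1),
        ((Nat.choose k j : ℕ) : ZMod p) * (-1) ^ j * cF p x j) / ((m : ZMod p) + 2) ^ k) := by
    refine PF.sum _ _ _ fun k hk => ?_
    rw [Finset.mem_range] at hk
    exact ((PF.natCast _).mul (PF.ofG hx hk)).div (((PF.self hm).add PF.two).pow k)
      (pow_ne_zero k h2)
  have hRHS : PF p ((qLegendre ((m + 2) * (m - 2)) p : ℚ) *
      ∑ k ∈ range p, ((2 * k).choose k : ℚ) * qchoose x k * qchoose (-1 - x) k / (2 - m) ^ k)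
      ((((m : ZMod p) + 2) * ((m : ZMod p) - 2)) ^ (p / 2) *
        ∑ k ∈ range p, ((Nat.choose (2 * k) k : ℕ) : ZMod p) * cF p x k / (2 - (m : ZMod p)) ^ k) := by
    refine hcoef.mul (PF.sum _ _ _ fun k hk => ?_)
    rw [Finset.mem_range] at hk
    have hterm := (((PF.natCast (Nat.choose (2 * k) k)).mul
        (PF.self ((PF.ofQchoose (PF.self hx) hk).1))).mul
        (PF.self ((PF.ofQchoose (PF.self ((PF.one.neg.sub (PF.self hx)).1)) hk).1))).div
      ((PF.two.sub (PF.self hm)).pow k) (pow_ne_zero k h2M)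
    exact hterm.congr_val (by rw [cF]; ring)
  exact (ratCong_iff hLHS hRHS).mpr (core2 hodd (cF p x) (m : ZMod p) h2 h2')

lemma notCong_iff {m c : ℚ} {vm vc : ZMod p} (hm : PF p m vm) (hc : PF p c vc) :
    ¬ RatCong p 1 m c ↔ vm ≠ vc := (ratCong_iff hm hc).not

end Glue



section Cors
variable {p : ℕ} [hp : Fact p.Prime]

lemma cor3 (hodd : Odd p) (hp3 : 3 < p) {m : ℚ} (hm : IsPInt p m)
    (h0 : (m : ZMod p) ≠ 0) (hN : (m : ZMod p) ≠ 27) :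
    RatCong p 1 (∑ k ∈ range p, G3 k / m ^ k)
      (∑ k ∈ range p, ((2 * k).choose k : ℚ) * ((3 * k).choose k : ℚ) / (27 - m) ^ k) := by
  have h27N : ((27 : ℕ) : ZMod p) ≠ 0 := by
    have := cast_2a3b_ne (p := p) hp3 0 3
    norm_num at this ⊢
    exact this
  have h27F : (27 : ZMod p) ≠ 0 := by
    have := h27N
    norm_num at this
    exact this
  have h27P : PF p (27 : ℚ) (27 : ZMod p) :=
    ((PF.natCast 27).congr_rat (by norm_num)).congr_val (by norm_num)
  have hm' : PF p (m / 27) ((m : ZMod p) / 27) := (PF.self hm).div h27P h27F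
  have hx : IsPInt p (-1/3 : ℚ) := by
    have h3 : ((3 : ℤ) : ZMod p) ≠ 0 := by
      have := cast_2a3b_ne (p := p) hp3 0 1
      norm_num at this
      push_cast
      exact_mod_cast this
    exact (PF.key (p := p) (r := -1/3) (n := -1) (d := 3) h3 (by norm_num)).1
  have hc0 : ((m / 27 : ℚ) : ZMod p) ≠ 0 := by
    rw [hm'.2]
    exact div_ne_zero h0 h27F
  have hc1 : ((m / 27 : ℚ) : ZMod p) ≠ 1 := by
    rw [hm'.2]
    intro h
    exact hN (by rw [div_eq_one_iff_eq h27F] at h; exact h)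
  have H := main1 hodd hm'.1 hx hc0 hc1
  have eL : ∑ k ∈ range p, G3 k / m ^ k = ∑ k ∈ range p, G k (-1/3) / (m / 27) ^ k := by
    refine Finset.sum_congr rfl fun k _ => ?_
    rw [G3, div_pow, div_div_eq_mul_div]
    ring
  have eR : ∑ k ∈ range p, qchoose (-1/3) k * qchoose (-1 - (-1/3)) k / (1 - m / 27) ^ k
      = ∑ k ∈ range p, ((2 * k).choose k : ℚ) * ((3 * k).choose k : ℚ) / (27 - m) ^ k := by
    refine Finset.sum_congr rfl fun k _ => ?_
    rw [show (-1 - (-1/3) : ℚ) = -2/3 from by norm_num,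
      show (1 - m / 27 : ℚ) = (27 - m) / 27 from by ring, div_pow, div_div_eq_mul_div]
    congr 1
    linear_combination G3_id k
  rw [eL, ← eR]
  exact H

lemma cor3' (hodd : Odd p) (hp3 : 3 < p) {m : ℚ} (hm : IsPInt p m)
    (h0 : (m : ZMod p) ≠ 0) (hN : (m : ZMod p) ≠ 108) :
    RatCong p 1 (∑ k ∈ range p, ((2 * k).choose k : ℚ) * G3 k / m ^ k)
      ((qLegendre (m * (m - 108)) p : ℚ) *
        ∑ k ∈ range p, ((2 * k).choose k : ℚ) ^ 2 * ((3 * k).choose k : ℚ) / (108 - m) ^ k) := by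
  have h27N : ((27 : ℕ) : ZMod p) ≠ 0 := by
    have := cast_2a3b_ne (p := p) hp3 0 3
    norm_num at this ⊢
    exact this
  have h27F : (27 : ZMod p) ≠ 0 := by
    have := h27N
    norm_num at this
    exact this
  have h27P : PF p (27 : ℚ) (27 : ZMod p) :=
    ((PF.natCast 27).congr_rat (by norm_num)).congr_val (by norm_num)
  have h108P : PF p (108 : ℚ) (108 : ZMod p) :=
    ((PF.natCast 108).congr_rat (by norm_num)).congr_val (by norm_num)
  have hm' : PF p (m / 27 - 2) ((m : ZMod p) / 27 - 2) := ((PF.self hm).div h27P h27F).sub PF.two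
  have hx : IsPInt p (-1/3 : ℚ) := by
    have h3 : ((3 : ℤ) : ZMod p) ≠ 0 := by
      have := cast_2a3b_ne (p := p) hp3 0 1
      norm_num at this
      push_cast
      exact_mod_cast this
    exact (PF.key (p := p) (r := -1/3) (n := -1) (d := 3) h3 (by norm_num)).1
  have hc2 : ((m / 27 - 2 : ℚ) : ZMod p) + 2 ≠ 0 := by
    rw [hm'.2]
    intro h
    exact h0 (by
      have : (m : ZMod p) / 27 = 0 := by linear_combination h
      rwa [div_eq_zero_iff, or_iff_left h27F] at this)
  have hc2' : ((m / 27 - 2 : ℚ) : ZMod p) - 2 ≠ 0 := by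
    rw [hm'.2]
    intro h
    apply hN
    have h4 : (m : ZMod p) / 27 = 4 := by linear_combination h
    field_simp at h4
    rw [h4]
    norm_num
  have H := main2 hodd hm'.1 hx hc2 hc2'
  -- replace the Legendre coefficient
  have hprod1 : PF p ((m / 27 - 2 + 2) * (m / 27 - 2 - 2))
      (((m : ZMod p) / 27 - 2 + 2) * ((m : ZMod p) / 27 - 2 - 2)) :=
    (hm'.add PF.two).mul (hm'.sub PF.two)
  have hprod2 : PF p (m * (m - 108)) ((m : ZMod p) * ((m : ZMod p) - 108)) :=
    (PF.self hm).mul ((PF.self hm).sub h108P)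
  have hLeg : qLegendre ((m / 27 - 2 + 2) * (m / 27 - 2 - 2)) p = qLegendre (m * (m - 108)) p := by
    refine qLegendre_congr hprod1 hprod2 (27 : ZMod p)⁻¹ (inv_ne_zero h27F) ?_
    field_simp
    ring
  rw [hLeg] at H
  have eL : ∑ k ∈ range p, ((2 * k).choose k : ℚ) * G3 k / m ^ k
      = ∑ k ∈ range p, ((2 * k).choose k : ℚ) * G k (-1/3) / (m / 27 - 2 + 2) ^ k := by
    refine Finset.sum_congr rfl fun k _ => ?_
    rw [show (m / 27 - 2 + 2 : ℚ) = m / 27 from by ring, G3, div_pow, div_div_eq_mul_div]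
    ring
  have eR : ∑ k ∈ range p, ((2 * k).choose k : ℚ) * qchoose (-1/3) k * qchoose (-1 - (-1/3)) k
        / (2 - (m / 27 - 2)) ^ k
      = ∑ k ∈ range p, ((2 * k).choose k : ℚ) ^ 2 * ((3 * k).choose k : ℚ) / (108 - m) ^ k := by
    refine Finset.sum_congr rfl fun k _ => ?_
    rw [show (-1 - (-1/3) : ℚ) = -2/3 from by norm_num,
      show (2 - (m / 27 - 2) : ℚ) = (108 - m) / 27 from by ring, div_pow, div_div_eq_mul_div]
    congr 1
    linear_combination ((2 * k).choose k : ℚ) * G3_id k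
  rw [eL, ← eR]
  exact H

end Cors




section Cors2
variable {p : ℕ} [hp : Fact p.Prime]

lemma cor4 (hodd : Odd p) (hp3 : 3 < p) {m : ℚ} (hm : IsPInt p m)
    (h0 : (m : ZMod p) ≠ 0) (hN : (m : ZMod p) ≠ 64) :
    RatCong p 1 (∑ k ∈ range p, G4 k / m ^ k)
      (∑ k ∈ range p, ((2 * k).choose k : ℚ) * ((4 * k).choose (2 * k) : ℚ) / (64 - m) ^ k) := by
  have h64N : ((64 : ℕ) : ZMod p) ≠ 0 := by
    have := cast_2a3b_ne (p := p) hp3 6 0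
    norm_num at this ⊢
    exact this
  have h64F : (64 : ZMod p) ≠ 0 := by
    have := h64N
    norm_num at this
    exact this
  have h64P : PF p (64 : ℚ) (64 : ZMod p) :=
    ((PF.natCast 64).congr_rat (by norm_num)).congr_val (by norm_num)
  have hm' : PF p (m / 64) ((m : ZMod p) / 64) := (PF.self hm).div h64P h64F
  have hx : IsPInt p (-1/4 : ℚ) := by
    have h3 : ((4 : ℤ) : ZMod p) ≠ 0 := by
      have := cast_2a3b_ne (p := p) hp3 2 0
      norm_num at this
      push_cast
      exact_mod_cast this
    exact (PF.key (p := p) (r := -1/4) (n := -1) (d := 4) h3 (by norm_num)).1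
  have hc0 : ((m / 64 : ℚ) : ZMod p) ≠ 0 := by
    rw [hm'.2]
    exact div_ne_zero h0 h64F
  have hc1 : ((m / 64 : ℚ) : ZMod p) ≠ 1 := by
    rw [hm'.2]
    intro h
    exact hN (by rw [div_eq_one_iff_eq h64F] at h; exact h)
  have H := main1 hodd hm'.1 hx hc0 hc1
  have eL : ∑ k ∈ range p, G4 k / m ^ k = ∑ k ∈ range p, G k (-1/4) / (m / 64) ^ k := by
    refine Finset.sum_congr rfl fun k _ => ?_
    rw [G4, div_pow, div_div_eq_mul_div]
    ring
  have eR : ∑ k ∈ range p, qchoose (-1/4) k * qchoose (-1 - (-1/4)) k / (1 - m / 64) ^ k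
      = ∑ k ∈ range p, ((2 * k).choose k : ℚ) * ((4 * k).choose (2 * k) : ℚ) / (64 - m) ^ k := by
    refine Finset.sum_congr rfl fun k _ => ?_
    rw [show (-1 - (-1/4) : ℚ) = -3/4 from by norm_num,
      show (1 - m / 64 : ℚ) = (64 - m) / 64 from by ring, div_pow, div_div_eq_mul_div]
    congr 1
    linear_combination G4_id k
  rw [eL, ← eR]
  exact H

lemma cor4' (hodd : Odd p) (hp3 : 3 < p) {m : ℚ} (hm : IsPInt p m)
    (h0 : (m : ZMod p) ≠ 0) (hN : (m : ZMod p) ≠ 256) :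
    RatCong p 1 (∑ k ∈ range p, ((2 * k).choose k : ℚ) * G4 k / m ^ k)
      ((qLegendre (m * (m - 256)) p : ℚ) *
        ∑ k ∈ range p, ((2 * k).choose k : ℚ) ^ 2 * ((4 * k).choose (2 * k) : ℚ) / (256 - m) ^ k) := by
  have h64N : ((64 : ℕ) : ZMod p) ≠ 0 := by
    have := cast_2a3b_ne (p := p) hp3 6 0
    norm_num at this ⊢
    exact this
  have h64F : (64 : ZMod p) ≠ 0 := by
    have := h64N
    norm_num at this
    exact this
  have h64P : PF p (64 : ℚ) (64 : ZMod p) :=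
    ((PF.natCast 64).congr_rat (by norm_num)).congr_val (by norm_num)
  have h256P : PF p (256 : ℚ) (256 : ZMod p) :=
    ((PF.natCast 256).congr_rat (by norm_num)).congr_val (by norm_num)
  have hm' : PF p (m / 64 - 2) ((m : ZMod p) / 64 - 2) := ((PF.self hm).div h64P h64F).sub PF.two
  have hx : IsPInt p (-1/4 : ℚ) := by
    have h3 : ((4 : ℤ) : ZMod p) ≠ 0 := by
      have := cast_2a3b_ne (p := p) hp3 2 0
      norm_num at this
      push_cast
      exact_mod_cast this
    exact (PF.key (p := p) (r := -1/4) (n := -1) (d := 4) h3 (by norm_num)).1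
  have hc2 : ((m / 64 - 2 : ℚ) : ZMod p) + 2 ≠ 0 := by
    rw [hm'.2]
    intro h
    exact h0 (by
      have : (m : ZMod p) / 64 = 0 := by linear_combination h
      rwa [div_eq_zero_iff, or_iff_left h64F] at this)
  have hc2' : ((m / 64 - 2 : ℚ) : ZMod p) - 2 ≠ 0 := by
    rw [hm'.2]
    intro h
    apply hN
    have h4 : (m : ZMod p) / 64 = 4 := by linear_combination h
    field_simp at h4
    rw [h4]
    norm_num
  have H := main2 hodd hm'.1 hx hc2 hc2'
  -- replace the Legendre coefficient
  have hprod1 : PF p ((m / 64 - 2 + 2) * (m / 64 - 2 - 2))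
      (((m : ZMod p) / 64 - 2 + 2) * ((m : ZMod p) / 64 - 2 - 2)) :=
    (hm'.add PF.two).mul (hm'.sub PF.two)
  have hprod2 : PF p (m * (m - 256)) ((m : ZMod p) * ((m : ZMod p) - 256)) :=
    (PF.self hm).mul ((PF.self hm).sub h256P)
  have hLeg : qLegendre ((m / 64 - 2 + 2) * (m / 64 - 2 - 2)) p = qLegendre (m * (m - 256)) p := by
    refine qLegendre_congr hprod1 hprod2 (64 : ZMod p)⁻¹ (inv_ne_zero h64F) ?_
    field_simp
    ring
  rw [hLeg] at H
  have eL : ∑ k ∈ range p, ((2 * k).choose k : ℚ) * G4 k / m ^ k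
      = ∑ k ∈ range p, ((2 * k).choose k : ℚ) * G k (-1/4) / (m / 64 - 2 + 2) ^ k := by
    refine Finset.sum_congr rfl fun k _ => ?_
    rw [show (m / 64 - 2 + 2 : ℚ) = m / 64 from by ring, G4, div_pow, div_div_eq_mul_div]
    ring
  have eR : ∑ k ∈ range p, ((2 * k).choose k : ℚ) * qchoose (-1/4) k * qchoose (-1 - (-1/4)) k
        / (2 - (m / 64 - 2)) ^ k
      = ∑ k ∈ range p, ((2 * k).choose k : ℚ) ^ 2 * ((4 * k).choose (2 * k) : ℚ) / (256 - m) ^ k := by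
    refine Finset.sum_congr rfl fun k _ => ?_
    rw [show (-1 - (-1/4) : ℚ) = -3/4 from by norm_num,
      show (2 - (m / 64 - 2) : ℚ) = (256 - m) / 64 from by ring, div_pow, div_div_eq_mul_div]
    congr 1
    linear_combination ((2 * k).choose k : ℚ) * G4_id k
  rw [eL, ← eR]
  exact H


lemma cor6 (hodd : Odd p) (hp3 : 3 < p) {m : ℚ} (hm : IsPInt p m)
    (h0 : (m : ZMod p) ≠ 0) (hN : (m : ZMod p) ≠ 432) :
    RatCong p 1 (∑ k ∈ range p, G6 k / m ^ k)
      (∑ k ∈ range p, ((3 * k).choose k : ℚ) * ((6 * k).choose (3 * k) : ℚ) / (432 - m) ^ k) := by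
  have h432N : ((432 : ℕ) : ZMod p) ≠ 0 := by
    have := cast_2a3b_ne (p := p) hp3 4 3
    norm_num at this ⊢
    exact this
  have h432F : (432 : ZMod p) ≠ 0 := by
    have := h432N
    norm_num at this
    exact this
  have h432P : PF p (432 : ℚ) (432 : ZMod p) :=
    ((PF.natCast 432).congr_rat (by norm_num)).congr_val (by norm_num)
  have hm' : PF p (m / 432) ((m : ZMod p) / 432) := (PF.self hm).div h432P h432F
  have hx : IsPInt p (-1/6 : ℚ) := by
    have h3 : ((6 : ℤ) : ZMod p) ≠ 0 := by
      have := cast_2a3b_ne (p := p) hp3 1 1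
      norm_num at this
      push_cast
      exact_mod_cast this
    exact (PF.key (p := p) (r := -1/6) (n := -1) (d := 6) h3 (by norm_num)).1
  have hc0 : ((m / 432 : ℚ) : ZMod p) ≠ 0 := by
    rw [hm'.2]
    exact div_ne_zero h0 h432F
  have hc1 : ((m / 432 : ℚ) : ZMod p) ≠ 1 := by
    rw [hm'.2]
    intro h
    exact hN (by rw [div_eq_one_iff_eq h432F] at h; exact h)
  have H := main1 hodd hm'.1 hx hc0 hc1
  have eL : ∑ k ∈ range p, G6 k / m ^ k = ∑ k ∈ range p, G k (-1/6) / (m / 432) ^ k := by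
    refine Finset.sum_congr rfl fun k _ => ?_
    rw [G6, div_pow, div_div_eq_mul_div]
    ring
  have eR : ∑ k ∈ range p, qchoose (-1/6) k * qchoose (-1 - (-1/6)) k / (1 - m / 432) ^ k
      = ∑ k ∈ range p, ((3 * k).choose k : ℚ) * ((6 * k).choose (3 * k) : ℚ) / (432 - m) ^ k := by
    refine Finset.sum_congr rfl fun k _ => ?_
    rw [show (-1 - (-1/6) : ℚ) = -5/6 from by norm_num,
      show (1 - m / 432 : ℚ) = (432 - m) / 432 from by ring, div_pow, div_div_eq_mul_div]
    congr 1
    linear_combination G6_id k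
  rw [eL, ← eR]
  exact H

lemma cor6' (hodd : Odd p) (hp3 : 3 < p) {m : ℚ} (hm : IsPInt p m)
    (h0 : (m : ZMod p) ≠ 0) (hN : (m : ZMod p) ≠ 1728) :
    RatCong p 1 (∑ k ∈ range p, ((2 * k).choose k : ℚ) * G6 k / m ^ k)
      ((qLegendre (m * (m - 1728)) p : ℚ) *
        ∑ k ∈ range p, ((2 * k).choose k : ℚ) * ((3 * k).choose k : ℚ) * ((6 * k).choose (3 * k) : ℚ) / (1728 - m) ^ k) := by
  have h432N : ((432 : ℕ) : ZMod p) ≠ 0 := by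
    have := cast_2a3b_ne (p := p) hp3 4 3
    norm_num at this ⊢
    exact this
  have h432F : (432 : ZMod p) ≠ 0 := by
    have := h432N
    norm_num at this
    exact this
  have h432P : PF p (432 : ℚ) (432 : ZMod p) :=
    ((PF.natCast 432).congr_rat (by norm_num)).congr_val (by norm_num)
  have h1728P : PF p (1728 : ℚ) (1728 : ZMod p) :=
    ((PF.natCast 1728).congr_rat (by norm_num)).congr_val (by norm_num)
  have hm' : PF p (m / 432 - 2) ((m : ZMod p) / 432 - 2) := ((PF.self hm).div h432P h432F).sub PF.two
  have hx : IsPInt p (-1/6 : ℚ) := by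
    have h3 : ((6 : ℤ) : ZMod p) ≠ 0 := by
      have := cast_2a3b_ne (p := p) hp3 1 1
      norm_num at this
      push_cast
      exact_mod_cast this
    exact (PF.key (p := p) (r := -1/6) (n := -1) (d := 6) h3 (by norm_num)).1
  have hc2 : ((m / 432 - 2 : ℚ) : ZMod p) + 2 ≠ 0 := by
    rw [hm'.2]
    intro h
    exact h0 (by
      have : (m : ZMod p) / 432 = 0 := by linear_combination h
      rwa [div_eq_zero_iff, or_iff_left h432F] at this)
  have hc2' : ((m / 432 - 2 : ℚ) : ZMod p) - 2 ≠ 0 := by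
    rw [hm'.2]
    intro h
    apply hN
    have h4 : (m : ZMod p) / 432 = 4 := by linear_combination h
    field_simp at h4
    rw [h4]
    norm_num
  have H := main2 hodd hm'.1 hx hc2 hc2'
  -- replace the Legendre coefficient
  have hprod1 : PF p ((m / 432 - 2 + 2) * (m / 432 - 2 - 2))
      (((m : ZMod p) / 432 - 2 + 2) * ((m : ZMod p) / 432 - 2 - 2)) :=
    (hm'.add PF.two).mul (hm'.sub PF.two)
  have hprod2 : PF p (m * (m - 1728)) ((m : ZMod p) * ((m : ZMod p) - 1728)) :=
    (PF.self hm).mul ((PF.self hm).sub h1728P)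
  have hLeg : qLegendre ((m / 432 - 2 + 2) * (m / 432 - 2 - 2)) p = qLegendre (m * (m - 1728)) p := by
    refine qLegendre_congr hprod1 hprod2 (432 : ZMod p)⁻¹ (inv_ne_zero h432F) ?_
    field_simp
    ring
  rw [hLeg] at H
  have eL : ∑ k ∈ range p, ((2 * k).choose k : ℚ) * G6 k / m ^ k
      = ∑ k ∈ range p, ((2 * k).choose k : ℚ) * G k (-1/6) / (m / 432 - 2 + 2) ^ k := by
    refine Finset.sum_congr rfl fun k _ => ?_
    rw [show (m / 432 - 2 + 2 : ℚ) = m / 432 from by ring, G6, div_pow, div_div_eq_mul_div]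
    ring
  have eR : ∑ k ∈ range p, ((2 * k).choose k : ℚ) * qchoose (-1/6) k * qchoose (-1 - (-1/6)) k
        / (2 - (m / 432 - 2)) ^ k
      = ∑ k ∈ range p, ((2 * k).choose k : ℚ) * ((3 * k).choose k : ℚ) * ((6 * k).choose (3 * k) : ℚ) / (1728 - m) ^ k := by
    refine Finset.sum_congr rfl fun k _ => ?_
    rw [show (-1 - (-1/6) : ℚ) = -5/6 from by norm_num,
      show (2 - (m / 432 - 2) : ℚ) = (1728 - m) / 432 from by ring, div_pow, div_div_eq_mul_div]
    congr 1
    linear_combination ((2 * k).choose k : ℚ) * G6_id k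
  rw [eL, ← eR]
  exact H


end Cors2

theorem stmt_6 (p : ℕ) (hp : p.Prime) (hodd : Odd p) (m x : ℚ)
    (hm : IsPInt p m) (hx : IsPInt p x) :
    (¬ RatCong p 1 m 0 → ¬ RatCong p 1 m 1 →
      RatCong p 1 (∑ k ∈ range p, G k x / m ^ k)
        (∑ k ∈ range p, qchoose x k * qchoose (-1 - x) k / (1 - m) ^ k)) ∧
    (¬ RatCong p 1 m 2 → ¬ RatCong p 1 m (-2) →
      RatCong p 1 (∑ k ∈ range p, ((2 * k).choose k : ℚ) * G k x / (m + 2) ^ k)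
        ((qLegendre ((m + 2) * (m - 2)) p : ℚ) *
          ∑ k ∈ range p,
            ((2 * k).choose k : ℚ) * qchoose x k * qchoose (-1 - x) k / (2 - m) ^ k)) ∧
    (3 < p →
      (¬ RatCong p 1 m 0 → ¬ RatCong p 1 m 27 →
        RatCong p 1 (∑ k ∈ range p, G3 k / m ^ k)
          (∑ k ∈ range p, ((2 * k).choose k : ℚ) * ((3 * k).choose k : ℚ) / (27 - m) ^ k)) ∧
      (¬ RatCong p 1 m 0 → ¬ RatCong p 1 m 64 →
        RatCong p 1 (∑ k ∈ range p, G4 k / m ^ k)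
          (∑ k ∈ range p,
            ((2 * k).choose k : ℚ) * ((4 * k).choose (2 * k) : ℚ) / (64 - m) ^ k)) ∧
      (¬ RatCong p 1 m 0 → ¬ RatCong p 1 m 432 →
        RatCong p 1 (∑ k ∈ range p, G6 k / m ^ k)
          (∑ k ∈ range p,
            ((3 * k).choose k : ℚ) * ((6 * k).choose (3 * k) : ℚ) / (432 - m) ^ k)) ∧
      (¬ RatCong p 1 m 0 → ¬ RatCong p 1 m 108 →
        RatCong p 1 (∑ k ∈ range p, ((2 * k).choose k : ℚ) * G3 k / m ^ k)
          ((qLegendre (m * (m - 108)) p : ℚ) *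
            ∑ k ∈ range p,
              ((2 * k).choose k : ℚ) ^ 2 * ((3 * k).choose k : ℚ) / (108 - m) ^ k)) ∧
      (¬ RatCong p 1 m 0 → ¬ RatCong p 1 m 256 →
        RatCong p 1 (∑ k ∈ range p, ((2 * k).choose k : ℚ) * G4 k / m ^ k)
          ((qLegendre (m * (m - 256)) p : ℚ) *
            ∑ k ∈ range p,
              ((2 * k).choose k : ℚ) ^ 2 * ((4 * k).choose (2 * k) : ℚ) / (256 - m) ^ k)) ∧
      (¬ RatCong p 1 m 0 → ¬ RatCong p 1 m 1728 →
        RatCong p 1 (∑ k ∈ range p, ((2 * k).choose k : ℚ) * G6 k / m ^ k)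
          ((qLegendre (m * (m - 1728)) p : ℚ) *
            ∑ k ∈ range p,
              ((2 * k).choose k : ℚ) * ((3 * k).choose k : ℚ) * ((6 * k).choose (3 * k) : ℚ) /
                (1728 - m) ^ k))) := by
  haveI : Fact p.Prime := ⟨hp⟩
  have hMne : ∀ {c : ℚ} {vc : ZMod p}, PF p c vc → ¬ RatCong p 1 m c → (m : ZMod p) ≠ vc :=
    fun hc h => (notCong_iff (PF.self hm) hc).mp h
  have l27 : PF p (27 : ℚ) (27 : ZMod p) :=
    ((PF.natCast 27).congr_rat (by norm_num)).congr_val (by norm_num)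
  have l64 : PF p (64 : ℚ) (64 : ZMod p) :=
    ((PF.natCast 64).congr_rat (by norm_num)).congr_val (by norm_num)
  have l432 : PF p (432 : ℚ) (432 : ZMod p) :=
    ((PF.natCast 432).congr_rat (by norm_num)).congr_val (by norm_num)
  have l108 : PF p (108 : ℚ) (108 : ZMod p) :=
    ((PF.natCast 108).congr_rat (by norm_num)).congr_val (by norm_num)
  have l256 : PF p (256 : ℚ) (256 : ZMod p) :=
    ((PF.natCast 256).congr_rat (by norm_num)).congr_val (by norm_num)
  have l1728 : PF p (1728 : ℚ) (1728 : ZMod p) :=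
    ((PF.natCast 1728).congr_rat (by norm_num)).congr_val (by norm_num)
  refine ⟨?_, ?_, fun hp3 => ⟨?_, ?_, ?_, ?_, ?_, ?_⟩⟩
  · intro h0 h1
    exact main1 hodd hm hx (hMne PF.zero h0) (hMne PF.one h1)
  · intro h2 h2'
    have hA : (m : ZMod p) - 2 ≠ 0 := sub_ne_zero.mpr (hMne PF.two h2)
    have hB : (m : ZMod p) + 2 ≠ 0 := fun h => (hMne PF.two.neg h2') (by linear_combination h)
    exact main2 hodd hm hx hB hA
  · intro h0 hN
    exact cor3 hodd hp3 hm (hMne PF.zero h0) (hMne l27 hN)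
  · intro h0 hN
    exact cor4 hodd hp3 hm (hMne PF.zero h0) (hMne l64 hN)
  · intro h0 hN
    exact cor6 hodd hp3 hm (hMne PF.zero h0) (hMne l432 hN)
  · intro h0 hN
    exact cor3' hodd hp3 hm (hMne PF.zero h0) (hMne l108 hN)
  · intro h0 hN
    exact cor4' hodd hp3 hm (hMne PF.zero h0) (hMne l256 hN)
  · intro h0 hN
    exact cor6' hodd hp3 hm (hMne PF.zero h0) (hMne l1728 hN)
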